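/- A symmetric uniform-block matrix N = A ∘ I[p] + B ∘ J[p] is positive definite if and only if the diagonal matrix A is positive definite (a_kk > 0 for all k) and all K eigenvalues of Δ = A + B×P are positive, where P = diag(p_1,...,p_K). -/

import Mathlib

open Matrix BigOperators Polynomial

/-- Block-diagonal expansion `A ∘ I[p]`: the `p × p` matrix `Bdiag(a₁ I_{p₁}, …, a_K I_{p_K})`,
indexed by the sigma type `Σ k, Fin (p k)`. -/
def blockI {K : ℕ} (p : Fin K → ℕ) (a : Fin K → ℝ) :
    Matrix (Σ k, Fin (p k)) (Σ k, Fin (p k)) ℝ :=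
  Matrix.diagonal (fun i => a i.1)

/-- Block all-ones expansion `B ∘ J[p]`: the `p × p` matrix whose `(k,k')` block is
`B k k' • 1_{p_k × p_{k'}}`. -/
def blockJ {K : ℕ} (p : Fin K → ℕ) (B : Matrix (Fin K) (Fin K) ℝ) :
    Matrix (Σ k, Fin (p k)) (Σ k, Fin (p k)) ℝ :=
  fun i j => B i.1 j.1

/-- `P = diag(p₁, …, p_K)`. -/
def Pmat {K : ℕ} (p : Fin K → ℕ) : Matrix (Fin K) (Fin K) ℝ :=
  Matrix.diagonal (fun k => (p k : ℝ))

lemma scalar_mulVec {n : Type*} [Fintype n] [DecidableEq n] (μ : ℝ) (v : n → ℝ) :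
    (Matrix.scalar n μ) *ᵥ v = μ • v := by
  ext i; simp [Matrix.scalar, Matrix.mulVec_diagonal]

lemma isRoot_charpoly_iff_exists {n : Type*} [Fintype n] [DecidableEq n] (A : Matrix n n ℝ) (μ : ℝ) :
    A.charpoly.IsRoot μ ↔ ∃ v, v ≠ 0 ∧ A *ᵥ v = μ • v := by
  have h : A.charpoly.eval μ = (Matrix.scalar n μ - A).det := by
    rw [Matrix.charpoly, eval_det, Matrix.matPolyEquiv_charmatrix]
    simp
  have h2 : (∃ v, v ≠ 0 ∧ (Matrix.scalar n μ - A) *ᵥ v = 0) ↔ (Matrix.scalar n μ - A).det = 0 :=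
    Matrix.exists_mulVec_eq_zero_iff
  rw [Polynomial.IsRoot, h, ← h2]
  apply exists_congr; intro v
  apply and_congr_right; intro hv
  rw [Matrix.sub_mulVec, sub_eq_zero, scalar_mulVec]
  exact comm

lemma posDef_conj_of_isUnit {n : Type*} [Fintype n] [DecidableEq n]
    {M U : Matrix n n ℝ} (hM : M.PosDef) (hU : IsUnit U) : (U * M * Uᴴ).PosDef := by
  refine Matrix.PosDef.of_dotProduct_mulVec_pos (Matrix.isHermitian_mul_mul_conjTranspose _ hM.1) fun ⦃x⦄ hx => ?_
  have hUH : IsUnit Uᴴ := by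
    rw [Matrix.isUnit_iff_isUnit_det] at hU ⊢
    simpa using hU
  have h1 : Uᴴ *ᵥ x ≠ 0 := by
    intro h0
    apply hx
    have hinj := (Matrix.mulVec_injective_iff_isUnit).mpr hUH
    apply hinj
    simpa using h0
  have := hM.dotProduct_mulVec_pos h1
  have key : star x ⬝ᵥ ((U * M * Uᴴ) *ᵥ x) = star (Uᴴ *ᵥ x) ⬝ᵥ (M *ᵥ (Uᴴ *ᵥ x)) := by
    rw [star_mulVec, ← Matrix.mulVec_mulVec, ← Matrix.mulVec_mulVec,
      Matrix.dotProduct_mulVec (star x), Matrix.conjTranspose_conjTranspose]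
  rw [key]; exact this

lemma posDef_of_eigen_pos {n : Type*} [Fintype n] [DecidableEq n]
    {M : Matrix n n ℝ} (hM : M.IsHermitian)
    (h : ∀ μ : ℝ, (∃ v, v ≠ 0 ∧ M *ᵥ v = μ • v) → 0 < μ) : M.PosDef := by
  have heig : ∀ i, 0 < hM.eigenvalues i := by
    intro i
    apply h
    refine ⟨hM.eigenvectorBasis i, (WithLp.ofLp_eq_zero 2).ne.2 <| hM.eigenvectorBasis.orthonormal.ne_zero i, ?_⟩
    simpa using hM.mulVec_eigenvectorBasis i
  have hD : (Matrix.diagonal (RCLike.ofReal ∘ hM.eigenvalues) : Matrix n n ℝ).PosDef := by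
    rw [Matrix.posDef_diagonal_iff]
    intro i; simpa using heig i
  have hU : IsUnit (hM.eigenvectorUnitary : Matrix n n ℝ) := by
    rw [Matrix.isUnit_iff_isUnit_det]
    exact isUnit_iff_isUnit_det _ |>.mp (Unitary.toUnits hM.eigenvectorUnitary).isUnit
  have := posDef_conj_of_isUnit hD hU
  rw [hM.spectral_theorem]
  exact this

lemma quad_formula {K : ℕ} (p : Fin K → ℕ) (a : Fin K → ℝ) (B : Matrix (Fin K) (Fin K) ℝ)
    (x : (Σ k, Fin (p k)) → ℝ) :
    x ⬝ᵥ ((blockI p a + blockJ p B) *ᵥ x)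
      = (∑ k, a k * ∑ j, (x ⟨k, j⟩)^2)
        + ∑ k, ∑ k', B k k' * ((∑ j, x ⟨k, j⟩) * (∑ j, x ⟨k', j⟩)) := by
  rw [Matrix.add_mulVec, dotProduct_add]
  congr 1
  · unfold blockI
    simp only [dotProduct, Matrix.mulVec_diagonal]
    rw [← Finset.univ_sigma_univ, Finset.sum_sigma]
    refine Finset.sum_congr rfl fun k _ => ?_
    rw [Finset.mul_sum]
    exact Finset.sum_congr rfl fun j _ => by ring
  · unfold blockJ
    simp only [dotProduct, Matrix.mulVec]
    rw [← Finset.univ_sigma_univ, Finset.sum_sigma]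
    refine Finset.sum_congr rfl fun k _ => ?_
    have inner : ∀ i : Σ k, Fin (p k), i.1 = k →
        (fun j => (blockJ p B) i j) ⬝ᵥ x = ∑ k', B k k' * ∑ j, x ⟨k', j⟩ := by
      intro i hi
      unfold blockJ
      rw [dotProduct, ← Finset.univ_sigma_univ, Finset.sum_sigma]
      refine Finset.sum_congr rfl fun k' _ => ?_
      rw [Finset.mul_sum]
      exact Finset.sum_congr rfl fun j _ => by rw [hi]
    calc ∑ j : Fin (p k), x ⟨k, j⟩ * ((blockJ p B) ⟨k, j⟩ ⬝ᵥ x)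
        = ∑ j : Fin (p k), x ⟨k, j⟩ * ∑ k', B k k' * ∑ j', x ⟨k', j'⟩ := by
          exact Finset.sum_congr rfl fun j _ => by rw [inner ⟨k, j⟩ rfl]
      _ = (∑ j, x ⟨k, j⟩) * ∑ k', B k k' * ∑ j', x ⟨k', j'⟩ := by
          rw [← Finset.sum_mul]
      _ = ∑ k', B k k' * ((∑ j, x ⟨k, j⟩) * (∑ j, x ⟨k', j⟩)) := by
          rw [Finset.mul_sum]
          exact Finset.sum_congr rfl fun k' _ => by ring

/-- A symmetric uniform-block matrix is positive definite iff `A` is positive definite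
(`a_k > 0` for all `k`) and all eigenvalues of `Δ = A + B P` (which are real) are positive. -/
theorem blockHadamard_posDef_iff {K : ℕ} (p : Fin K → ℕ) (hp : ∀ k, 1 < p k)
    (a : Fin K → ℝ) (B : Matrix (Fin K) (Fin K) ℝ) (hB : B.IsSymm) :
    (blockI p a + blockJ p B).PosDef ↔
      ((∀ k, 0 < a k) ∧
        ∀ μ : ℝ, (Matrix.diagonal a + B * Pmat p).charpoly.IsRoot μ → 0 < μ) := by
  classical
  have hp0 : ∀ k, (0:ℝ) < p k := fun k => by exact_mod_cast Nat.zero_lt_of_lt (hp k)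
  have hsq : ∀ k, (0:ℝ) < Real.sqrt (p k) := fun k => Real.sqrt_pos.mpr (hp0 k)
  set S : Matrix (Fin K) (Fin K) ℝ := Matrix.diagonal (fun k => Real.sqrt (p k)) with hSdef
  set Sinv : Matrix (Fin K) (Fin K) ℝ := Matrix.diagonal (fun k => (Real.sqrt (p k))⁻¹)
    with hSinvdef
  set M : Matrix (Fin K) (Fin K) ℝ := Matrix.diagonal a + S * B * S with hMdef
  set Δ : Matrix (Fin K) (Fin K) ℝ := Matrix.diagonal a + B * Pmat p with hΔdef
  have hSS : S * S = Pmat p := by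
    rw [hSdef, Matrix.diagonal_mul_diagonal]
    unfold Pmat
    exact congrArg Matrix.diagonal (funext fun k => Real.mul_self_sqrt (hp0 k).le)
  have hSinvS : Sinv * S = 1 := by
    rw [hSinvdef, hSdef, Matrix.diagonal_mul_diagonal, ← Matrix.diagonal_one]
    exact congrArg Matrix.diagonal (funext fun k => inv_mul_cancel₀ (hsq k).ne')
  have hSSinv : S * Sinv = 1 := by
    rw [hSinvdef, hSdef, Matrix.diagonal_mul_diagonal, ← Matrix.diagonal_one]
    exact congrArg Matrix.diagonal (funext fun k => mul_inv_cancel₀ (hsq k).ne')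
  have hdiagScomm : Matrix.diagonal a * S = S * Matrix.diagonal a := by
    rw [hSdef, Matrix.diagonal_mul_diagonal, Matrix.diagonal_mul_diagonal]
    exact congrArg Matrix.diagonal (funext fun k => mul_comm _ _)
  have hMS : M * S = S * Δ := by
    calc M * S = Matrix.diagonal a * S + S * (B * (S * S)) := by
          rw [hMdef]; noncomm_ring
    _ = S * Matrix.diagonal a + S * (B * Pmat p) := by rw [hdiagScomm, hSS]
    _ = S * Δ := by rw [hΔdef, mul_add]
  have hΔeq : Δ = Sinv * M * S := by
    rw [mul_assoc, hMS, ← mul_assoc, hSinvS, one_mul]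
  have hΔSinv : Δ * Sinv = Sinv * M := by
    rw [hΔeq, mul_assoc, mul_assoc, hSSinv, mul_one]
  -- eigenvector transfers
  have eigM_of_eigΔ : ∀ (μ : ℝ) (v : Fin K → ℝ), v ≠ 0 → Δ *ᵥ v = μ • v →
      ∃ w, w ≠ 0 ∧ M *ᵥ w = μ • w := by
    intro μ v hv hΔv
    refine ⟨S *ᵥ v, ?_, ?_⟩
    · intro h0
      apply hv
      have : Sinv *ᵥ (S *ᵥ v) = 0 := by rw [h0, Matrix.mulVec_zero]
      rwa [Matrix.mulVec_mulVec, hSinvS, Matrix.one_mulVec] at this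
    · rw [Matrix.mulVec_mulVec, hMS, ← Matrix.mulVec_mulVec, hΔv, Matrix.mulVec_smul]
  have eigΔ_of_eigM : ∀ (μ : ℝ) (w : Fin K → ℝ), w ≠ 0 → M *ᵥ w = μ • w →
      ∃ v, v ≠ 0 ∧ Δ *ᵥ v = μ • v := by
    intro μ w hw hMw
    refine ⟨Sinv *ᵥ w, ?_, ?_⟩
    · intro h0
      apply hw
      have : S *ᵥ (Sinv *ᵥ w) = 0 := by rw [h0, Matrix.mulVec_zero]
      rwa [Matrix.mulVec_mulVec, hSSinv, Matrix.one_mulVec] at this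
    · rw [Matrix.mulVec_mulVec, hΔSinv, ← Matrix.mulVec_mulVec, hMw, Matrix.mulVec_smul]
  -- M is symmetric
  have hMsymm : M.IsHermitian := by
    rw [Matrix.IsHermitian, Matrix.conjTranspose_eq_transpose_of_trivial, hMdef,
      Matrix.transpose_add, Matrix.diagonal_transpose, Matrix.transpose_mul,
      Matrix.transpose_mul, Matrix.diagonal_transpose, hB.eq]
    rw [hSdef]
    congr 1
    rw [mul_assoc]
  -- key equivalence : root condition ↔ M.PosDef
  have keyM : (∀ μ : ℝ, Δ.charpoly.IsRoot μ → 0 < μ) ↔ M.PosDef := by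
    constructor
    · intro h
      apply posDef_of_eigen_pos hMsymm
      rintro μ ⟨w, hw, hMw⟩
      obtain ⟨v, hv, hΔv⟩ := eigΔ_of_eigM μ w hw hMw
      exact h μ ((isRoot_charpoly_iff_exists Δ μ).mpr ⟨v, hv, hΔv⟩)
    · intro hMpd μ hroot
      obtain ⟨v, hv, hΔv⟩ := (isRoot_charpoly_iff_exists Δ μ).mp hroot
      obtain ⟨w, hw, hMw⟩ := eigM_of_eigΔ μ v hv hΔv
      have h1 : 0 < w ⬝ᵥ (M *ᵥ w) := by
        have := hMpd.dotProduct_mulVec_pos hw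
        rwa [star_trivial] at this
      have h2 : w ⬝ᵥ (M *ᵥ w) = μ * (w ⬝ᵥ w) := by
        rw [hMw, dotProduct_smul, smul_eq_mul]
      have h3 : 0 < w ⬝ᵥ w := by
        have := Matrix.dotProduct_self_star_pos_iff.mpr hw
        rwa [star_trivial] at this
      rw [h2] at h1
      nlinarith
  rw [show ((∀ k, 0 < a k) ∧
        ∀ μ : ℝ, (Matrix.diagonal a + B * Pmat p).charpoly.IsRoot μ → 0 < μ) =
      ((∀ k, 0 < a k) ∧ M.PosDef) from by rw [← hΔdef, keyM]]
  -- quadratic form of M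
  have Mquad : ∀ c : Fin K → ℝ, c ⬝ᵥ (M *ᵥ c)
      = (∑ k, a k * (c k)^2)
        + ∑ k, ∑ k', B k k' * ((Real.sqrt (p k) * c k) * (Real.sqrt (p k') * c k')) := by
    intro c
    rw [hMdef, Matrix.add_mulVec, dotProduct_add]
    congr 1
    · simp only [dotProduct, Matrix.mulVec_diagonal]
      exact Finset.sum_congr rfl fun k _ => by ring
    · have hSc : S *ᵥ c = fun k => Real.sqrt (p k) * c k := by
        funext k
        rw [hSdef]
        exact Matrix.mulVec_diagonal _ _ _
      have hS2 : ∀ w : Fin K → ℝ, S *ᵥ w = fun k => Real.sqrt (p k) * w k := by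
        intro w
        funext k
        rw [hSdef]
        exact Matrix.mulVec_diagonal _ _ _
      rw [← Matrix.mulVec_mulVec, ← Matrix.mulVec_mulVec, hSc, hS2]
      simp only [dotProduct, Matrix.mulVec, Finset.mul_sum]
      refine Finset.sum_congr rfl fun k _ => Finset.sum_congr rfl fun k' _ => by ring
  constructor
  · -- N PosDef → a positive and M PosDef
    intro hN
    constructor
    · intro k
      have h01 : (0 : ℕ) < p k := Nat.zero_lt_of_lt (hp k)
      set i0 : (Σ k, Fin (p k)) := ⟨k, ⟨0, h01⟩⟩ with hi0
      set i1 : (Σ k, Fin (p k)) := ⟨k, ⟨1, hp k⟩⟩ with hi1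
      have hne : i0 ≠ i1 := by
        intro h
        rw [hi0, hi1, Sigma.mk.inj_iff] at h
        have := h.2
        simp [Fin.ext_iff] at this
      set x : (Σ k, Fin (p k)) → ℝ := Pi.single i0 1 - Pi.single i1 1 with hxdef
      have hx : x ≠ 0 := by
        intro h
        have := congrFun h i0
        simp only [hxdef, Pi.sub_apply] at this
        simp [Pi.single_apply, hne] at this
      have hq := hN.dotProduct_mulVec_pos hx
      rw [star_trivial] at hq
      have hcomp : x ⬝ᵥ ((blockI p a + blockJ p B) *ᵥ x) = 2 * a k := by
        set N := blockI p a + blockJ p B with hNdef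
        have hNii : ∀ i j : (Σ k, Fin (p k)), (N *ᵥ (Pi.single j 1)) i = N i j := by
          intro i j
          rw [Matrix.mulVec_single]
          exact mul_one _
        rw [hxdef, Matrix.mulVec_sub, dotProduct_sub, sub_dotProduct,
          sub_dotProduct]
        have hsd : ∀ (w : (Σ k, Fin (p k)) → ℝ) (i), Pi.single i (1:ℝ) ⬝ᵥ w = w i := by
          intro w i
          rw [single_dotProduct, one_mul]
        rw [hsd, hsd, hsd, hsd, hNii, hNii, hNii, hNii]
        have e00 : N i0 i0 = a k + B k k := by
          rw [hNdef]
          simp [blockI, blockJ, Matrix.diagonal_apply_eq, hi0]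
        have e11 : N i1 i1 = a k + B k k := by
          rw [hNdef]
          simp [blockI, blockJ, Matrix.diagonal_apply_eq, hi1]
        have e01 : N i0 i1 = B k k := by
          rw [hNdef]
          simp [blockI, blockJ, Matrix.diagonal_apply_ne _ hne, hi0, hi1]
        have e10 : N i1 i0 = B k k := by
          rw [hNdef]
          simp [blockI, blockJ, Matrix.diagonal_apply_ne _ (Ne.symm hne), hi0, hi1]
        rw [e00, e11, e01, e10]
        ring
      rw [hcomp] at hq
      linarith
    · -- M PosDef
      refine Matrix.PosDef.of_dotProduct_mulVec_pos hMsymm fun ⦃c⦄ hc => ?_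
      rw [star_trivial]
      set x : (Σ k, Fin (p k)) → ℝ := fun i => c i.1 * (Real.sqrt (p i.1))⁻¹ with hxdef
      have hx : x ≠ 0 := by
        intro h
        apply hc
        funext k
        have := congrFun h ⟨k, ⟨0, Nat.zero_lt_of_lt (hp k)⟩⟩
        simp only [hxdef, Pi.zero_apply] at this
        have h2 := mul_eq_zero.mp this
        rcases h2 with h2 | h2
        · exact h2
        · exact absurd h2 (inv_ne_zero (hsq k).ne')
      have hq := hN.dotProduct_mulVec_pos hx
      rw [star_trivial, quad_formula] at hq
      have hsum : ∀ k, (∑ j : Fin (p k), x ⟨k, j⟩) = Real.sqrt (p k) * c k := by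
        intro k
        simp only [hxdef]
        rw [Finset.sum_const, Finset.card_univ, Fintype.card_fin, nsmul_eq_mul]
        calc (p k : ℝ) * (c k * (Real.sqrt (p k))⁻¹)
            = (Real.sqrt (p k) * Real.sqrt (p k)) * (c k * (Real.sqrt (p k))⁻¹) := by
              rw [Real.mul_self_sqrt (hp0 k).le]
          _ = Real.sqrt (p k) * c k * (Real.sqrt (p k) * (Real.sqrt (p k))⁻¹) := by ring
          _ = Real.sqrt (p k) * c k := by rw [mul_inv_cancel₀ (hsq k).ne', mul_one]
      have hsq2 : ∀ k, (∑ j : Fin (p k), (x ⟨k, j⟩)^2) = (c k)^2 := by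
        intro k
        simp only [hxdef]
        rw [Finset.sum_const, Finset.card_univ, Fintype.card_fin, nsmul_eq_mul,
          mul_pow, inv_pow, Real.sq_sqrt (hp0 k).le, mul_comm ((c k)^2) _, ← mul_assoc,
          mul_inv_cancel₀ (hp0 k).ne', one_mul]
      rw [Mquad c]
      calc (0:ℝ) < _ := hq
      _ = (∑ k, a k * (c k)^2)
        + ∑ k, ∑ k', B k k' * ((Real.sqrt (p k) * c k) * (Real.sqrt (p k') * c k')) := by
          congr 1
          · exact Finset.sum_congr rfl fun k _ => by rw [hsq2]
          · exact Finset.sum_congr rfl fun k _ => Finset.sum_congr rfl fun k' _ => by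
              rw [hsum, hsum]
  · -- a positive and M PosDef → N PosDef
    rintro ⟨ha, hMpd⟩
    have hNherm : (blockI p a + blockJ p B).IsHermitian := by
      rw [Matrix.IsHermitian, Matrix.conjTranspose_eq_transpose_of_trivial,
        Matrix.transpose_add]
      congr 1
      · exact (Matrix.isSymm_diagonal _).eq
      · funext i j
        rw [Matrix.transpose_apply]
        exact hB.apply i.1 j.1
    refine Matrix.PosDef.of_dotProduct_mulVec_pos hNherm fun ⦃x⦄ hx => ?_
    rw [star_trivial, quad_formula]
    set s : Fin K → ℝ := fun k => ∑ j, x ⟨k, j⟩ with hsdef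
    by_cases hs : s = 0
    · have hz : ∀ k k', B k k' * ((∑ j, x ⟨k, j⟩) * (∑ j, x ⟨k', j⟩)) = 0 := by
        intro k k'
        have : (∑ j, x ⟨k, j⟩) = 0 := congrFun hs k
        rw [this]
        ring
      have : (∑ k, ∑ k', B k k' * ((∑ j, x ⟨k, j⟩) * (∑ j, x ⟨k', j⟩))) = 0 := by
        simp [hz]
      rw [this, add_zero]
      obtain ⟨i, hi⟩ := Function.ne_iff.mp hx
      apply Finset.sum_pos'
      · intro k _
        exact mul_nonneg (ha k).le (Finset.sum_nonneg fun j _ => sq_nonneg _)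
      · refine ⟨i.1, Finset.mem_univ _, ?_⟩
        apply mul_pos (ha i.1)
        apply Finset.sum_pos'
        · intro j _
          exact sq_nonneg _
        · refine ⟨i.2, Finset.mem_univ _, ?_⟩
          rw [Sigma.eta]
          exact pow_two_pos_of_ne_zero hi
    · -- s ≠ 0
      set t : Fin K → ℝ := fun k => s k * (Real.sqrt (p k))⁻¹ with htdef
      have ht : t ≠ 0 := by
        intro h
        apply hs
        funext k
        have := congrFun h k
        simp only [htdef, Pi.zero_apply] at this
        rcases mul_eq_zero.mp this with h2 | h2
        · exact h2
        · exact absurd h2 (inv_ne_zero (hsq k).ne')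
      have hqt := hMpd.dotProduct_mulVec_pos ht
      rw [star_trivial, Mquad] at hqt
      have htv : ∀ k, Real.sqrt (p k) * t k = s k := by
        intro k
        simp only [htdef]
        rw [← mul_assoc, mul_comm (Real.sqrt (p k)) (s k), mul_assoc,
          mul_inv_cancel₀ (hsq k).ne', mul_one]
      have htsq : ∀ k, a k * (t k)^2 = a k * ((s k)^2 * ((p k : ℝ))⁻¹) := by
        intro k
        simp only [htdef]
        rw [mul_pow, inv_pow, Real.sq_sqrt (hp0 k).le]
      have hqt2 : 0 < (∑ k, a k * ((s k)^2 * ((p k):ℝ)⁻¹))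
          + ∑ k, ∑ k', B k k' * (s k * s k') := by
        calc (0:ℝ) < _ := hqt
        _ = _ := by
          congr 1
          · exact Finset.sum_congr rfl fun k _ => htsq k
          · exact Finset.sum_congr rfl fun k _ => Finset.sum_congr rfl fun k' _ => by
              rw [htv, htv]
      have hblock : ∀ k, (s k)^2 * ((p k):ℝ)⁻¹ ≤ ∑ j, (x ⟨k, j⟩)^2 := by
        intro k
        have hCS : (s k)^2 ≤ (p k : ℝ) * ∑ j, (x ⟨k, j⟩)^2 := by
          have := sq_sum_le_card_mul_sum_sq (s := (Finset.univ : Finset (Fin (p k))))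
            (f := fun j => x ⟨k, j⟩)
          rw [Finset.card_univ, Fintype.card_fin] at this
          simp only [hsdef]
          exact_mod_cast this
        have h4 := mul_le_mul_of_nonneg_right hCS (inv_pos.mpr (hp0 k)).le
        rwa [mul_comm ((p k : ℝ)) _, mul_assoc, mul_inv_cancel₀ (hp0 k).ne', mul_one] at h4
      have h1 : (∑ k, a k * ((s k)^2 * ((p k):ℝ)⁻¹)) ≤ ∑ k, a k * ∑ j, (x ⟨k, j⟩)^2 :=
        Finset.sum_le_sum fun k _ => mul_le_mul_of_nonneg_left (hblock k) (ha k).le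
      have h2 : (∑ k, ∑ k', B k k' * ((∑ j, x ⟨k, j⟩) * (∑ j, x ⟨k', j⟩)))
          = ∑ k, ∑ k', B k k' * (s k * s k') := by
        exact Finset.sum_congr rfl fun k _ => Finset.sum_congr rfl fun k' _ => rfl
      rw [h2]
      linarith
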